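/- For every positive integer π, there exist prime numbers n and p with p not divisible by n such that the class of p in the multiplicative group of units of Z/nZ has order exactly 2π and p^π ≡ −1 (mod n). -/

import Mathlib

/-- Number-theoretic core of the Main Theorem: for every positive integer `π` there are
primes `n` and `p`, with `p` not divisible by `n`, such that `p` has multiplicative
order exactly `2π` modulo `n` and `p^π ≡ -1 (mod n)`. -/
theorem stmt9 (π : ℕ) (hπ : 0 < π) :
    ∃ n p : ℕ, n.Prime ∧ p.Prime ∧ ¬ n ∣ p ∧
      orderOf ((p : ZMod n)) = 2 * π ∧ (p : ℤ) ^ π ≡ -1 [ZMOD n] := by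
  obtain ⟨n, hn, hn2, hmod⟩ := Nat.exists_prime_gt_modEq_one (k := 2 * π) 2 (by omega)
  haveI : Fact n.Prime := ⟨hn⟩
  have hdvd : 2 * π ∣ n - 1 := (Nat.modEq_iff_dvd' (by omega)).mp hmod.symm
  obtain ⟨k, hk⟩ := hdvd
  have hcard : Fintype.card (ZMod n)ˣ = 2 * π * k := by
    rw [ZMod.card_units_eq_totient, Nat.totient_prime hn, hk]
  obtain ⟨g, hg⟩ := IsCyclic.exists_ofOrder_eq_natCard (α := (ZMod n)ˣ)
  rw [Nat.card_eq_fintype_card, hcard] at hg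
  have hk0 : k ≠ 0 := by rintro rfl; simp [Nat.mul_zero] at hg; exact hg (orderOf_pos_iff.mp (orderOf_pos g))
  set u := g ^ k with hu
  have hou : orderOf u = 2 * π := by
    rw [hu, orderOf_pow, hg, Nat.gcd_eq_right (dvd_mul_left k (2 * π)),
      Nat.mul_div_cancel _ (Nat.pos_of_ne_zero hk0)]
  obtain ⟨p, hpgt, hp, hpu⟩ :=
    Nat.forall_exists_prime_gt_and_eq_mod (q := n) (a := (u : ZMod n)) u.isUnit 2
  have hord : orderOf ((p : ZMod n)) = 2 * π := by rw [hpu, orderOf_units, hou]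
  refine ⟨n, p, hn, hp, ?_, hord, ?_⟩
  · intro hdvd
    have : (p : ZMod n) = 0 := (ZMod.natCast_eq_zero_iff p n).mpr hdvd
    rw [hpu] at this
    exact u.ne_zero this
  · have hx2 : ((p : ZMod n)) ^ π * ((p : ZMod n)) ^ π = 1 := by
      rw [← pow_add, ← two_mul, ← hord, pow_orderOf_eq_one]
    have hx1 : ((p : ZMod n)) ^ π ≠ 1 := by
      intro h
      have := orderOf_dvd_of_pow_eq_one h
      rw [hord] at this
      exact absurd (Nat.le_of_dvd hπ this) (by omega)
    have hxne : ((p : ZMod n)) ^ π = -1 := by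
      rcases mul_self_eq_one_iff.mp hx2 with h | h
      · exact absurd h hx1
      · exact h
    have : (((p : ℤ) ^ π : ℤ) : ZMod n) = ((-1 : ℤ) : ZMod n) := by push_cast [hxne]; ring
    exact (ZMod.intCast_eq_intCast_iff _ _ _).mp this
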